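/- Let γ > 1, c₀ > 0, and set λ := (γ−1)/(γ+1) ∈ (0,1). Let b : ℕ → ℝ be any sequence satisfying the recursion b(n) = −(1/2) · Σ_{i=0}^{n−1} i! · λ^i / c₀^{i+1} · b(n−1−i) for all n ≥ 1. Then there exists a constant C > 0 such that |b(n)| ≤ C · (λ/c₀)ⁿ · n! for all n ∈ ℕ. -/

import Mathlib

noncomputable section

lemma choose_lb : ∀ m i : ℕ, 0 < i → i < m → m ≤ m.choose i := by
  intro m
  induction m with
  | zero => intro i h1 h2; omega
  | succ k ih =>
    intro i h1 h2
    rcases Nat.lt_or_ge i k with hik | hik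
    · obtain ⟨j, rfl⟩ : ∃ j, i = j + 1 := ⟨i - 1, by omega⟩
      rw [Nat.choose_succ_succ]
      have h3 : 1 ≤ k.choose j := Nat.choose_pos (by omega)
      have h4 : k ≤ k.choose (j+1) := by
        rcases Nat.eq_zero_or_pos j with rfl | hj
        · simpa using hik
        · exact ih (j+1) (by omega) hik
      have h5 : k.choose j.succ = k.choose (j+1) := rfl
      omega
    · have : i = k := by omega
      subst this
      simp [Nat.choose_succ_self_right]

lemma fact_mid {m i : ℕ} (h1 : 0 < i) (h2 : i < m) :
    i.factorial * (m - i).factorial ≤ (m - 1).factorial := by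
  have hle : i ≤ m := le_of_lt h2
  have key := Nat.choose_mul_factorial_mul_factorial hle
  have hcb := choose_lb m i h1 h2
  have hmpos : 0 < m := by omega
  have key' : m.choose i * (i.factorial * (m - i).factorial) = m.factorial := by
    rw [← mul_assoc]; exact key
  have : m * (i.factorial * (m - i).factorial) ≤ m.choose i * (i.factorial * (m - i).factorial) :=
    Nat.mul_le_mul_right _ hcb
  rw [key'] at this
  have hm : m.factorial = m * (m-1).factorial := by
    obtain ⟨p, rfl⟩ : ∃ p, m = p + 1 := ⟨m - 1, by omega⟩
    simp [Nat.factorial_succ]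
  rw [hm] at this
  exact Nat.le_of_mul_le_mul_left this hmpos

lemma sum_fact_le (m : ℕ) :
    ∑ i ∈ Finset.range (m + 1), i.factorial * (m - i).factorial ≤ 3 * m.factorial := by
  rcases Nat.eq_zero_or_pos m with rfl | hm
  · simp
  obtain ⟨k, rfl⟩ : ∃ k, m = k + 1 := ⟨m - 1, by omega⟩
  rw [Finset.sum_range_succ, Finset.sum_range_succ']
  have hmid : ∑ i ∈ Finset.range k, (i+1).factorial * (k + 1 - (i+1)).factorial
      ≤ k * k.factorial := by
    calc ∑ i ∈ Finset.range k, (i+1).factorial * (k + 1 - (i+1)).factorial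
        ≤ ∑ _i ∈ Finset.range k, k.factorial := by
          apply Finset.sum_le_sum
          intro i hi
          have := fact_mid (m := k+1) (i := i+1) (by omega) (by simpa using Finset.mem_range.mp hi)
          simpa using this
      _ = k * k.factorial := by simp [mul_comm]
  simp only [Nat.sub_self, Nat.factorial_zero, mul_one, Nat.sub_zero, one_mul]
  have h1 : k * k.factorial ≤ (k+1).factorial := by
    rw [Nat.factorial_succ]; exact Nat.mul_le_mul_right _ (by omega)
  have : (k+1).factorial + (k+1).factorial + (k+1).factorial = 3 * (k+1).factorial := by ring
  omega

theorem recursion_factorial_growth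
    (γ c₀ : ℝ) (hγ : 1 < γ) (hc₀ : 0 < c₀)
    (lam : ℝ) (hlam : lam = (γ - 1) / (γ + 1))
    (hlam0 : 0 < lam) (hlam1 : lam < 1)
    (b : ℕ → ℝ)
    (hrec : ∀ n : ℕ, 1 ≤ n →
      b n = -(1 / 2) * ∑ i ∈ Finset.range n,
        (i.factorial : ℝ) * lam ^ i / c₀ ^ (i + 1) * b (n - 1 - i)) :
    ∃ C : ℝ, 0 < C ∧ ∀ n : ℕ, |b n| ≤ C * (lam / c₀) ^ n * (n.factorial : ℝ) := by
  obtain ⟨N, hN⟩ := exists_nat_ge (3 / (2 * lam))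
  have hNlam : 3 ≤ 2 * lam * N := by
    rw [div_le_iff₀ (by positivity)] at hN
    nlinarith
  set g : ℕ → ℝ := fun k => |b k| * (c₀ / lam) ^ k / (k.factorial : ℝ) with hg
  have hterm_nonneg : ∀ k, 0 ≤ g k := by
    intro k
    have : (0:ℝ) < (k.factorial : ℝ) := by exact_mod_cast k.factorial_pos
    positivity
  set C : ℝ := 1 + ∑ k ∈ Finset.range N, g k with hCdef
  have hC0 : 0 < C := by
    have : 0 ≤ ∑ k ∈ Finset.range N, g k :=
      Finset.sum_nonneg fun k _ => hterm_nonneg k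
    rw [hCdef]; linarith
  refine ⟨C, hC0, ?_⟩
  intro n
  induction n using Nat.strong_induction_on with
  | _ n ih =>
  have hfactn : (0:ℝ) < (n.factorial : ℝ) := by exact_mod_cast n.factorial_pos
  rcases lt_or_ge n N with hn | hn
  · -- small case
    have hgn : g n ≤ C := by
      have h1 := Finset.single_le_sum (fun k _ => hterm_nonneg k) (Finset.mem_range.mpr hn)
      rw [hCdef]; linarith
    have hmix : (c₀ / lam) ^ n * (lam / c₀) ^ n = 1 := by
      rw [← mul_pow]
      field_simp
      exact one_pow n
    have heq : |b n| = g n * ((lam / c₀) ^ n * (n.factorial : ℝ)) := by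
      rw [hg]
      field_simp
      rw [mul_assoc, hmix, mul_one]
    rw [heq, mul_assoc]
    exact mul_le_mul_of_nonneg_right hgn (by positivity)
  · -- large case, n ≥ N ≥ 1
    have hN1 : 1 ≤ N := by
      by_contra h
      push_neg at h
      interval_cases N
      norm_num at hNlam
    have hn1 : 1 ≤ n := le_trans hN1 hn
    obtain ⟨m, rfl⟩ : ∃ m, n = m + 1 := ⟨n - 1, by omega⟩
    rw [hrec (m+1) (by omega)]
    have key : ∀ i ∈ Finset.range (m+1),
        |(i.factorial : ℝ) * lam ^ i / c₀ ^ (i + 1) * b (m + 1 - 1 - i)|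
          ≤ C * lam ^ m / c₀ ^ (m+1) * ((i.factorial : ℝ) * ((m-i).factorial : ℝ)) := by
      intro i hi
      have him : i ≤ m := by simpa [Nat.lt_succ_iff] using Finset.mem_range.mp hi
      have h1 : m + 1 - 1 - i = m - i := by omega
      have hbb := ih (m - i) (by omega)
      have hpos1 : 0 ≤ (i.factorial : ℝ) * lam ^ i / c₀ ^ (i + 1) := by positivity
      rw [h1, abs_mul, abs_of_nonneg hpos1]
      calc (i.factorial : ℝ) * lam ^ i / c₀ ^ (i + 1) * |b (m - i)|
          ≤ (i.factorial : ℝ) * lam ^ i / c₀ ^ (i + 1) *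
              (C * (lam / c₀) ^ (m - i) * ((m - i).factorial : ℝ)) :=
            mul_le_mul_of_nonneg_left hbb hpos1
        _ = C * lam ^ m / c₀ ^ (m+1) * ((i.factorial : ℝ) * ((m-i).factorial : ℝ)) := by
            have hl : lam ^ i * lam ^ (m - i) = lam ^ m := by
              rw [← pow_add]; congr 1; omega
            have hc : c₀ ^ (i + 1) * c₀ ^ (m - i) = c₀ ^ (m + 1) := by
              rw [← pow_add]; congr 1; omega
            rw [div_pow, ← hl, ← hc]
            field_simp
    have habs : |∑ i ∈ Finset.range (m+1),
        (i.factorial : ℝ) * lam ^ i / c₀ ^ (i + 1) * b (m + 1 - 1 - i)|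
        ≤ C * lam ^ m / c₀ ^ (m+1) * (3 * (m.factorial : ℝ)) := by
      calc |∑ i ∈ Finset.range (m+1), (i.factorial : ℝ) * lam ^ i / c₀ ^ (i + 1) * b (m + 1 - 1 - i)|
          ≤ ∑ i ∈ Finset.range (m+1),
              |(i.factorial : ℝ) * lam ^ i / c₀ ^ (i + 1) * b (m + 1 - 1 - i)| :=
            Finset.abs_sum_le_sum_abs _ _
        _ ≤ ∑ i ∈ Finset.range (m+1),
              C * lam ^ m / c₀ ^ (m+1) * ((i.factorial : ℝ) * ((m-i).factorial : ℝ)) :=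
            Finset.sum_le_sum key
        _ = C * lam ^ m / c₀ ^ (m+1) *
              ∑ i ∈ Finset.range (m+1), ((i.factorial : ℝ) * ((m-i).factorial : ℝ)) := by
            rw [Finset.mul_sum]
        _ ≤ C * lam ^ m / c₀ ^ (m+1) * (3 * (m.factorial : ℝ)) := by
            apply mul_le_mul_of_nonneg_left _ (by positivity)
            exact_mod_cast sum_fact_le m
    rw [abs_mul]
    have habs2 : |(-(1/2) : ℝ)| = 1/2 := by norm_num
    rw [habs2]
    have hfinal : (1/2 : ℝ) * (C * lam ^ m / c₀ ^ (m+1) * (3 * (m.factorial : ℝ)))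
        ≤ C * (lam / c₀) ^ (m+1) * (((m+1).factorial : ℝ)) := by
      have hfm : (0:ℝ) < (m.factorial : ℝ) := by exact_mod_cast m.factorial_pos
      have hA : (0:ℝ) < C * lam ^ m / c₀ ^ (m+1) * (m.factorial : ℝ) := by positivity
      have h2n : (3:ℝ) ≤ 2 * lam * (m+1) := by
        have hNn : (N:ℝ) ≤ (m+1 : ℕ) := Nat.cast_le.mpr hn
        push_cast at hNn
        nlinarith
      have hfe : C * (lam / c₀) ^ (m+1) * (((m+1).factorial : ℝ))
          = (C * lam ^ m / c₀ ^ (m+1) * (m.factorial : ℝ)) * (lam * (m+1)) := by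
        rw [div_pow, Nat.factorial_succ]
        push_cast
        rw [pow_succ]
        field_simp
      rw [hfe]
      calc (1/2 : ℝ) * (C * lam ^ m / c₀ ^ (m+1) * (3 * (m.factorial : ℝ)))
          = (C * lam ^ m / c₀ ^ (m+1) * (m.factorial : ℝ)) * (3/2) := by ring
        _ ≤ (C * lam ^ m / c₀ ^ (m+1) * (m.factorial : ℝ)) * (lam * (m+1)) := by
            apply mul_le_mul_of_nonneg_left _ hA.le
            linarith
    calc (1/2 : ℝ) * |∑ i ∈ Finset.range (m+1),
          (i.factorial : ℝ) * lam ^ i / c₀ ^ (i + 1) * b (m + 1 - 1 - i)|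
        ≤ (1/2 : ℝ) * (C * lam ^ m / c₀ ^ (m+1) * (3 * (m.factorial : ℝ))) := by linarith
      _ ≤ C * (lam / c₀) ^ (m+1) * (((m+1).factorial : ℝ)) := hfinal
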